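/- arXiv:2410.14843 — 3 statements merged into one kernel-verified Lean document; each statement's English description precedes it below -/
import Mathlib

section
/- For a random variable X with E[X] = m and a point y ∈ ℝ with P(X = y) = 0, the function F(c) := E|X − c| is differentiable at c with derivative E[sign(c − X)]; consequently the one-sample estimator sign(y^sim − y) is an unbiased estimator of the derivative of E|Y_φ − y| with respect to a location-shift parameter φ, when Y_φ = φ + ε with ε having a continuous distribution. -/
open MeasureTheory

lemma measurable_realSign : Measurable Real.sign := by
  unfold Real.sign
  exact Measurable.ite (measurableSet_lt measurable_id measurable_const) measurable_const
    (Measurable.ite (measurableSet_lt measurable_const measurable_id) measurable_const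
      measurable_const)

/-- Key lemma: derivative of `t ↦ ∫ |X − t|` at a point `c` with `P(X = c) = 0`. -/
lemma key_deriv {Ω : Type*} [MeasurableSpace Ω] (P : Measure Ω)
    [IsProbabilityMeasure P]
    (X : Ω → ℝ) (hXm : Measurable X) (hXint : Integrable X P)
    (c : ℝ) (hnoatom : P {ω | X ω = c} = 0) :
    HasDerivAt (fun t => ∫ ω, |X ω - t| ∂P)
      (∫ ω, Real.sign (c - X ω) ∂P) c := by
  have h := hasDerivAt_integral_of_dominated_loc_of_lip
    (F := fun t ω => |X ω - t|) (F' := fun ω => Real.sign (c - X ω))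
    (x₀ := c) (bound := fun _ => (1 : ℝ)) (μ := P) (Metric.ball_mem_nhds c one_pos)
    ?meas ?int ?meas' ?lip ?bint ?diff
  · exact h.2
  case meas =>
    filter_upwards with t
    exact ((hXm.sub measurable_const).abs).aestronglyMeasurable
  case int =>
    have : Integrable (fun ω => |X ω - c|) P := (hXint.sub (integrable_const c)).abs
    exact this
  case meas' =>
    exact (measurable_realSign.comp ((measurable_const.sub hXm))).aestronglyMeasurable
  case lip =>
    filter_upwards with ω
    have : LipschitzWith 1 (fun t => |X ω - t|) := by
      have h1 : LipschitzWith 1 (fun t : ℝ => X ω - t) := by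
        simpa using (LipschitzWith.const (X ω)).sub LipschitzWith.id
      simpa [Function.comp_def] using lipschitzWith_one_norm.comp h1
    simpa using this.lipschitzOnWith (s := Metric.ball c 1)
  case bint =>
    exact integrable_const 1
  case diff =>
    have hae : ∀ᵐ ω ∂P, X ω ≠ c := by
      rw [ae_iff]; simpa using hnoatom
    filter_upwards [hae] with ω hω
    have hne : X ω - c ≠ 0 := sub_ne_zero.mpr hω
    have habs : HasDerivAt (fun u : ℝ => |u|) (SignType.sign (X ω - c) : ℝ) (X ω - c) :=
      hasDerivAt_abs hne
    have hlin : HasDerivAt (fun t : ℝ => X ω - t) (-1) c := by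
      simpa using (hasDerivAt_id c).const_sub (X ω)
    have := habs.comp c hlin
    refine this.congr_deriv (Eq.symm ?_)
    rcases lt_or_gt_of_ne hne with h | h
    · rw [Real.sign_of_pos (by linarith : (0:ℝ) < c - X ω)]
      simp [sign_neg h, h, not_lt.mpr h.le, h.not_gt]
    · rw [Real.sign_of_neg (by linarith : c - X ω < 0)]
      simp [sign_pos h, h, not_lt.mpr h.le]

/-- For an integrable random variable `X` with `P(X = y) = 0`, the function
`F(c) = E|X − c|` is differentiable at `y` with derivative `E[sign(y − X)]`;
consequently, for a location family `Y_φ = φ + ε` with `ε ~ q` atomless and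
integrable, `E[sign(y^sim − y)]` is an unbiased estimator of the derivative of
`φ ↦ E|Y_φ − y|`. -/
theorem stmt11 {Ω : Type*} [MeasurableSpace Ω] (P : Measure Ω)
    [IsProbabilityMeasure P]
    (X : Ω → ℝ) (hXm : Measurable X) (hXint : Integrable X P)
    (y : ℝ) (hnoatom : P {ω | X ω = y} = 0)
    (q : Measure ℝ) [IsProbabilityMeasure q] [NullSingletonClass q]
    (hεint : Integrable (fun e => |e|) q) :
    HasDerivAt (fun c => ∫ ω, |X ω - c| ∂P)
      (∫ ω, Real.sign (y - X ω) ∂P) y ∧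
    (∀ φ : ℝ, HasDerivAt (fun s => ∫ e, |(s + e) - y| ∂q)
      (∫ e, Real.sign ((φ + e) - y) ∂q) φ) := by
  constructor
  · exact key_deriv P X hXm hXint y hnoatom
  · intro φ
    have hid : Measurable (fun e : ℝ => e) := measurable_id
    have hidint : Integrable (fun e : ℝ => e) q := by
      have := hεint
      rwa [← integrable_norm_iff hid.aestronglyMeasurable]
    have hG : HasDerivAt (fun t => ∫ e, |e - t| ∂q)
        (∫ e, Real.sign ((y - φ) - e) ∂q) (y - φ) :=
      key_deriv q (fun e => e) hid hidint (y - φ) (measure_singleton _)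
    have hlin : HasDerivAt (fun s : ℝ => y - s) (-1) φ := by
      simpa using (hasDerivAt_id φ).const_sub y
    have hcomp := hG.comp φ hlin
    have heq : (fun s : ℝ => ∫ e, |e - (y - s)| ∂q) = fun s => ∫ e, |(s + e) - y| ∂q := by
      funext s
      congr 1
      funext e
      congr 1
      ring
    simp only [Function.comp_def] at hcomp
    rw [heq] at hcomp
    refine hcomp.congr_deriv (Eq.symm ?_)
    rw [mul_neg_one, ← integral_neg]
    congr 1
    funext e
    rw [show (y - φ) - e = -((φ + e) - y) by ring, Real.sign_neg, neg_neg]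
end

section
/- CRPS is a proper scoring rule: for integrable real random variables with CDFs F (forecast) and G (truth), E_{y∼G}[−E|X−y| + (1/2)E|X−X'|] ≤ E_{y∼G}[−E|Y−y| + (1/2)E|Y−Y'|], where X,X' ~ F and Y,Y' ~ G are independent; equivalently E|X−Y| − (1/2)E|X−X'| − (1/2)E|Y−Y'| ≥ 0. -/
open MeasureTheory Set

namespace CRPSAux

noncomputable def f (x y t : ℝ) : ENNReal :=
  (if x ≤ t then 1 else 0) * (if t < y then 1 else 0) +
  (if y ≤ t then 1 else 0) * (if t < x then 1 else 0)

lemma f_eq (x y : ℝ) (t : ℝ) :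
    f x y t = (Ico x y).indicator 1 t + (Ico y x).indicator 1 t := by
  simp only [f, indicator_apply, mem_Ico, Pi.one_apply]
  split_ifs <;> simp_all

lemma lintegral_f (x y : ℝ) : ∫⁻ t, f x y t = ENNReal.ofReal |x - y| := by
  simp only [f_eq]
  rw [lintegral_add_left ((measurable_one.indicator measurableSet_Ico))]
  rw [lintegral_indicator_one measurableSet_Ico, lintegral_indicator_one measurableSet_Ico,
    Real.volume_Ico, Real.volume_Ico]
  rcases le_total x y with h | h
  · rw [abs_of_nonpos (by linarith), ENNReal.ofReal_of_nonpos (by linarith : x - y ≤ 0)]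
    simp [neg_sub]
  · rw [abs_of_nonneg (by linarith), ENNReal.ofReal_of_nonpos (by linarith : y - x ≤ 0)]
    simp

lemma m_le_const (x : ℝ) : Measurable fun t : ℝ => (if x ≤ t then (1:ENNReal) else 0) :=
  Measurable.ite measurableSet_Ici measurable_const measurable_const

lemma m_lt_const (x : ℝ) : Measurable fun t : ℝ => (if t < x then (1:ENNReal) else 0) :=
  Measurable.ite measurableSet_Iio measurable_const measurable_const

lemma m_const_le (t : ℝ) : Measurable fun y : ℝ => (if y ≤ t then (1:ENNReal) else 0) :=
  Measurable.ite measurableSet_Iic measurable_const measurable_const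

lemma m_const_lt (t : ℝ) : Measurable fun y : ℝ => (if t < y then (1:ENNReal) else 0) :=
  Measurable.ite measurableSet_Ioi measurable_const measurable_const

lemma lint_ite_lt (ρ : Measure ℝ) (t : ℝ) :
    ∫⁻ y, (if t < y then (1:ENNReal) else 0) ∂ρ = ρ (Ioi t) := by
  have : ∀ y : ℝ, (if t < y then (1:ENNReal) else 0) = (Ioi t).indicator 1 y := by
    intro y; simp [indicator_apply]
  simp_rw [this]
  exact lintegral_indicator_one measurableSet_Ioi

lemma lint_ite_le (ρ : Measure ℝ) (t : ℝ) :
    ∫⁻ y, (if y ≤ t then (1:ENNReal) else 0) ∂ρ = ρ (Iic t) := by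
  have : ∀ y : ℝ, (if y ≤ t then (1:ENNReal) else 0) = (Iic t).indicator 1 y := by
    intro y; simp [indicator_apply]
  simp_rw [this]
  exact lintegral_indicator_one measurableSet_Iic

lemma meas_f (x : ℝ) : Measurable (Function.uncurry fun y t => f x y t) := by
  have : (Function.uncurry fun y t => f x y t) = fun p : ℝ × ℝ =>
      (if x ≤ p.2 then (1:ENNReal) else 0) * (if p.2 < p.1 then 1 else 0) +
      (if p.1 ≤ p.2 then 1 else 0) * (if p.2 < x then 1 else 0) := by
    ext p; rfl
  rw [this]
  apply Measurable.add
  · exact ((m_le_const x).comp measurable_snd).mul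
      (Measurable.ite (measurableSet_lt measurable_snd measurable_fst)
        measurable_const measurable_const)
  · exact (Measurable.ite (measurableSet_le measurable_fst measurable_snd)
      measurable_const measurable_const).mul ((m_lt_const x).comp measurable_snd)

lemma lint_y (ρ : Measure ℝ) [IsProbabilityMeasure ρ] (x t : ℝ) :
    ∫⁻ y, f x y t ∂ρ
      = (if x ≤ t then 1 else 0) * ρ (Ioi t) + ρ (Iic t) * (if t < x then 1 else 0) := by
  unfold f
  rw [lintegral_add_left (((m_const_lt t).const_mul _)),
    lintegral_const_mul _ (m_const_lt t), lintegral_mul_const _ (m_const_le t),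
    lint_ite_lt, lint_ite_le]

lemma key (ν ρ : Measure ℝ) [IsProbabilityMeasure ν] [IsProbabilityMeasure ρ] :
    ∫⁻ x, ∫⁻ y, ENNReal.ofReal |x - y| ∂ρ ∂ν
      = ∫⁻ t, (ν (Iic t) * ρ (Ioi t) + ρ (Iic t) * ν (Ioi t)) := by
  have step1 : ∀ x : ℝ, ∫⁻ y, ENNReal.ofReal |x - y| ∂ρ
      = ∫⁻ t, ((if x ≤ t then 1 else 0) * ρ (Ioi t) + ρ (Iic t) * (if t < x then 1 else 0)) := by
    intro x
    have h : ∀ y : ℝ, ENNReal.ofReal |x - y| = ∫⁻ t, f x y t := fun y => (lintegral_f x y).symm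
    simp_rw [h]
    rw [lintegral_lintegral_swap (meas_f x).aemeasurable]
    simp_rw [lint_y ρ x]
  simp_rw [step1]
  have hmeas : AEMeasurable (Function.uncurry fun (x t : ℝ) =>
      (if x ≤ t then (1:ENNReal) else 0) * ρ (Ioi t) + ρ (Iic t) * (if t < x then 1 else 0))
      (ν.prod volume) := by
    have : (Function.uncurry fun (x t : ℝ) =>
        (if x ≤ t then (1:ENNReal) else 0) * ρ (Ioi t) + ρ (Iic t) * (if t < x then 1 else 0))
        = fun p : ℝ × ℝ =>
          (if p.1 ≤ p.2 then (1:ENNReal) else 0) * ρ (Ioi p.2)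
            + ρ (Iic p.2) * (if p.2 < p.1 then 1 else 0) := by ext p; rfl
    rw [this]
    have hIoi : Measurable fun t : ℝ => ρ (Ioi t) :=
      Antitone.measurable (fun a b hab => measure_mono (Ioi_subset_Ioi hab))
    have hIic : Measurable fun t : ℝ => ρ (Iic t) :=
      Monotone.measurable (fun a b hab => measure_mono (Iic_subset_Iic.2 hab))
    exact (((Measurable.ite (measurableSet_le measurable_fst measurable_snd)
      measurable_const measurable_const).mul (hIoi.comp measurable_snd)).add
      ((hIic.comp measurable_snd).mul (Measurable.ite
        (measurableSet_lt measurable_snd measurable_fst)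
        measurable_const measurable_const))).aemeasurable
  rw [lintegral_lintegral_swap hmeas]
  congr 1
  ext t
  have hIoi : (ρ (Ioi t) : ENNReal) ≠ ⊤ := measure_ne_top ρ _
  rw [lintegral_add_left (((m_const_le t).mul_const _)),
    lintegral_mul_const _ (m_const_le t), lintegral_const_mul _ (m_const_lt t),
    lint_ite_le, lint_ite_lt]


lemma lint_abs_lt_top (ν : Measure ℝ) (hν : Integrable (fun x => |x|) ν) :
    ∫⁻ x, ENNReal.ofReal |x| ∂ν < ⊤ := by
  have := hν.hasFiniteIntegral
  simpa [HasFiniteIntegral, ← ofReal_norm, Real.norm_eq_abs,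
    abs_abs] using this

lemma inner_lt_top (ν ρ : Measure ℝ) [IsProbabilityMeasure ρ]
    (hρ : Integrable (fun x => |x|) ρ) (x : ℝ) :
    ∫⁻ y, ENNReal.ofReal |x - y| ∂ρ < ⊤ := by
  calc ∫⁻ y, ENNReal.ofReal |x - y| ∂ρ
      ≤ ∫⁻ y, (ENNReal.ofReal |x| + ENNReal.ofReal |y|) ∂ρ := by
        apply lintegral_mono
        intro y
        show ENNReal.ofReal |x - y| ≤ ENNReal.ofReal |x| + ENNReal.ofReal |y|
        rw [← ENNReal.ofReal_add (abs_nonneg x) (abs_nonneg y)]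
        exact ENNReal.ofReal_le_ofReal (abs_sub _ _)
    _ = ENNReal.ofReal |x| + ∫⁻ y, ENNReal.ofReal |y| ∂ρ := by
        rw [lintegral_add_left measurable_const, lintegral_const, measure_univ, mul_one]
    _ < ⊤ := ENNReal.add_lt_top.2 ⟨ENNReal.ofReal_lt_top, lint_abs_lt_top ρ hρ⟩

lemma double_lt_top (ν ρ : Measure ℝ) [IsProbabilityMeasure ν] [IsProbabilityMeasure ρ]
    (hν : Integrable (fun x => |x|) ν) (hρ : Integrable (fun x => |x|) ρ) :
    ∫⁻ x, ∫⁻ y, ENNReal.ofReal |x - y| ∂ρ ∂ν < ⊤ := by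
  calc ∫⁻ x, ∫⁻ y, ENNReal.ofReal |x - y| ∂ρ ∂ν
      ≤ ∫⁻ x, (ENNReal.ofReal |x| + ∫⁻ y, ENNReal.ofReal |y| ∂ρ) ∂ν := by
        apply lintegral_mono
        intro x
        calc ∫⁻ y, ENNReal.ofReal |x - y| ∂ρ
            ≤ ∫⁻ y, (ENNReal.ofReal |x| + ENNReal.ofReal |y|) ∂ρ := by
              apply lintegral_mono
              intro y
              show ENNReal.ofReal |x - y| ≤ ENNReal.ofReal |x| + ENNReal.ofReal |y|
              rw [← ENNReal.ofReal_add (abs_nonneg x) (abs_nonneg y)]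
              exact ENNReal.ofReal_le_ofReal (abs_sub _ _)
          _ = ENNReal.ofReal |x| + ∫⁻ y, ENNReal.ofReal |y| ∂ρ := by
              rw [lintegral_add_left measurable_const, lintegral_const, measure_univ, mul_one]
    _ = (∫⁻ x, ENNReal.ofReal |x| ∂ν) + ∫⁻ y, ENNReal.ofReal |y| ∂ρ := by
        rw [lintegral_add_right _ measurable_const, lintegral_const, measure_univ, mul_one]
    _ < ⊤ := ENNReal.add_lt_top.2 ⟨lint_abs_lt_top ν hν, lint_abs_lt_top ρ hρ⟩

lemma meas_pair : Measurable fun p : ℝ × ℝ => ENNReal.ofReal |p.1 - p.2| :=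
  ((measurable_fst.sub measurable_snd).abs).ennreal_ofReal

lemma conv (ν ρ : Measure ℝ) [IsProbabilityMeasure ν] [IsProbabilityMeasure ρ]
    (hρ : Integrable (fun x => |x|) ρ) :
    ∫ x, ∫ y, |x - y| ∂ρ ∂ν = (∫⁻ x, ∫⁻ y, ENNReal.ofReal |x - y| ∂ρ ∂ν).toReal := by
  have hinner : ∀ x : ℝ, ∫ y, |x - y| ∂ρ = (∫⁻ y, ENNReal.ofReal |x - y| ∂ρ).toReal := by
    intro x
    rw [integral_eq_lintegral_of_nonneg_ae (f := fun y => |x - y|) (Filter.Eventually.of_forall fun y => abs_nonneg _)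
      (((measurable_const.sub measurable_id').abs).aestronglyMeasurable)]
  simp_rw [hinner]
  have hg : Measurable fun x => ∫⁻ y, ENNReal.ofReal |x - y| ∂ρ :=
    Measurable.lintegral_prod_right meas_pair
  rw [integral_eq_lintegral_of_nonneg_ae
    (Filter.Eventually.of_forall fun x => ENNReal.toReal_nonneg)
    (hg.ennreal_toReal.aestronglyMeasurable)]
  congr 1
  apply lintegral_congr
  intro x
  exact ENNReal.ofReal_toReal (inner_lt_top ν ρ hρ x).ne

/-- the pointwise inequality on CDFs -/
lemma ptwise (ν ρ : Measure ℝ) [IsProbabilityMeasure ν] [IsProbabilityMeasure ρ] (t : ℝ) :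
    ν (Iic t) * ν (Ioi t) + ρ (Iic t) * ρ (Ioi t)
      ≤ ν (Iic t) * ρ (Ioi t) + ρ (Iic t) * ν (Ioi t) := by
  have hν1 : ν (Ioi t) = 1 - ν (Iic t) := by
    rw [← prob_compl_eq_one_sub measurableSet_Iic, compl_Iic]
  have hρ1 : ρ (Ioi t) = 1 - ρ (Iic t) := by
    rw [← prob_compl_eq_one_sub measurableSet_Iic, compl_Iic]
  set a := ν (Iic t) with ha
  set b := ρ (Iic t) with hb
  have haT : a ≠ ⊤ := measure_ne_top ν _
  have hbT : b ≠ ⊤ := measure_ne_top ρ _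
  have ha1 : a ≤ 1 := prob_le_one
  have hb1 : b ≤ 1 := prob_le_one
  rw [hν1, hρ1]
  -- move to reals
  rw [← ENNReal.toReal_le_toReal]
  · rw [ENNReal.toReal_add, ENNReal.toReal_add, ENNReal.toReal_mul, ENNReal.toReal_mul,
      ENNReal.toReal_mul, ENNReal.toReal_mul, ENNReal.toReal_sub_of_le ha1 (by simp),
      ENNReal.toReal_sub_of_le hb1 (by simp)]
    · have h1 : (a.toReal - b.toReal)^2 ≥ 0 := sq_nonneg _
      have ha0 : 0 ≤ a.toReal := ENNReal.toReal_nonneg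
      have hb0 : 0 ≤ b.toReal := ENNReal.toReal_nonneg
      simp only [ENNReal.toReal_one]
      nlinarith [h1]
    all_goals
      first
        | exact ENNReal.mul_ne_top haT (by simp [ENNReal.sub_ne_top])
        | exact ENNReal.mul_ne_top hbT (by simp [ENNReal.sub_ne_top])
  · exact ENNReal.add_ne_top.2 ⟨ENNReal.mul_ne_top haT (by simp [ENNReal.sub_ne_top]),
      ENNReal.mul_ne_top hbT (by simp [ENNReal.sub_ne_top])⟩
  · exact ENNReal.add_ne_top.2 ⟨ENNReal.mul_ne_top haT (by simp [ENNReal.sub_ne_top]),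
      ENNReal.mul_ne_top hbT (by simp [ENNReal.sub_ne_top])⟩


noncomputable def I (ν ρ : Measure ℝ) : ENNReal :=
  ∫⁻ t, (ν (Iic t) * ρ (Ioi t) + ρ (Iic t) * ν (Ioi t))

lemma mIic (μ : Measure ℝ) : Measurable fun t : ℝ => μ (Iic t) :=
  Monotone.measurable (fun _ _ hab => measure_mono (Iic_subset_Iic.2 hab))

lemma mIoi (μ : Measure ℝ) : Measurable fun t : ℝ => μ (Ioi t) :=
  Antitone.measurable (fun _ _ hab => measure_mono (Ioi_subset_Ioi hab))

lemma Imono (ν ρ : Measure ℝ) [IsProbabilityMeasure ν] [IsProbabilityMeasure ρ] :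
    I ν ν + I ρ ρ ≤ I ν ρ + I ν ρ := by
  unfold I
  rw [← lintegral_add_left (f := fun t => ν (Iic t) * ν (Ioi t) + ν (Iic t) * ν (Ioi t)) (((mIic ν).mul (mIoi ν)).add ((mIic ν).mul (mIoi ν))),
    ← lintegral_add_left (f := fun t => ν (Iic t) * ρ (Ioi t) + ρ (Iic t) * ν (Ioi t)) (((mIic ν).mul (mIoi ρ)).add ((mIic ρ).mul (mIoi ν)))]
  refine lintegral_mono fun t => ?_
  have h := ptwise ν ρ t
  calc ν (Iic t) * ν (Ioi t) + ν (Iic t) * ν (Ioi t)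
        + (ρ (Iic t) * ρ (Ioi t) + ρ (Iic t) * ρ (Ioi t))
      = (ν (Iic t) * ν (Ioi t) + ρ (Iic t) * ρ (Ioi t))
        + (ν (Iic t) * ν (Ioi t) + ρ (Iic t) * ρ (Ioi t)) := by ring
    _ ≤ (ν (Iic t) * ρ (Ioi t) + ρ (Iic t) * ν (Ioi t))
        + (ν (Iic t) * ρ (Ioi t) + ρ (Iic t) * ν (Ioi t)) := add_le_add h h

lemma Icomm (ν ρ : Measure ℝ) : I ρ ν = I ν ρ := by
  unfold I
  refine lintegral_congr fun t => ?_
  ring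

lemma convI (ν ρ : Measure ℝ) [IsProbabilityMeasure ν] [IsProbabilityMeasure ρ]
    (hρ : Integrable (fun x => |x|) ρ) :
    ∫ x, ∫ y, |x - y| ∂ρ ∂ν = (I ν ρ).toReal := by
  rw [conv ν ρ hρ, key ν ρ]; rfl

lemma Ifin (ν ρ : Measure ℝ) [IsProbabilityMeasure ν] [IsProbabilityMeasure ρ]
    (hν : Integrable (fun x => |x|) ν) (hρ : Integrable (fun x => |x|) ρ) :
    I ν ρ ≠ ⊤ := by
  have := double_lt_top ν ρ hν hρ
  rw [key ν ρ] at this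
  exact this.ne

lemma inner_eq (ν : Measure ℝ) (y : ℝ) :
    ∫ x, |x - y| ∂ν = (∫⁻ x, ENNReal.ofReal |x - y| ∂ν).toReal := by
  rw [integral_eq_lintegral_of_nonneg_ae (f := fun x => |x - y|) (Filter.Eventually.of_forall fun x => abs_nonneg _)
    (((measurable_id'.sub measurable_const).abs).aestronglyMeasurable)]

lemma h_integrable (ν ρ : Measure ℝ) [IsProbabilityMeasure ν] [IsProbabilityMeasure ρ]
    (hν : Integrable (fun x => |x|) ν) (hρ : Integrable (fun x => |x|) ρ) :
    Integrable (fun y => ∫ x, |x - y| ∂ν) ρ := by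
  have hint : ∀ y : ℝ, Integrable (fun x => |x - y|) ν := by
    intro y
    refine Integrable.mono (hν.add (integrable_const |y|))
      (((measurable_id'.sub measurable_const).abs).aestronglyMeasurable) ?_
    refine Filter.Eventually.of_forall fun x => ?_
    simp only [Real.norm_eq_abs, abs_abs, Pi.add_apply]
    rw [abs_of_nonneg (by positivity : (0:ℝ) ≤ |x| + |y|)]
    exact abs_sub _ _
  have hmeas : AEStronglyMeasurable (fun y => ∫ x, |x - y| ∂ν) ρ := by
    have : (fun y => ∫ x, |x - y| ∂ν)
        = fun y => (∫⁻ x, ENNReal.ofReal |x - y| ∂ν).toReal := by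
      ext y; exact inner_eq ν y
    rw [this]
    exact (Measurable.ennreal_toReal (Measurable.lintegral_prod_right
      (f := fun y x => ENNReal.ofReal |x - y|)
      (((measurable_snd.sub measurable_fst).abs).ennreal_ofReal))).aestronglyMeasurable
  refine Integrable.mono ((integrable_const (∫ x, |x| ∂ν)).add hρ) hmeas ?_
  refine Filter.Eventually.of_forall fun y => ?_
  simp only [Real.norm_eq_abs, Pi.add_apply]
  have h1 : 0 ≤ ∫ x, |x - y| ∂ν := integral_nonneg fun x => abs_nonneg _
  rw [abs_of_nonneg h1]
  have h2 : ∫ x, |x - y| ∂ν ≤ ∫ x, (|x| + |y|) ∂ν := by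
    refine integral_mono (hint y) (hν.add (integrable_const |y|)) fun x => abs_sub _ _
  rw [integral_add hν (integrable_const |y|), integral_const, probReal_univ] at h2
  calc ∫ x, |x - y| ∂ν ≤ ∫ x, |x| ∂ν + |y| := by simpa using h2
    _ ≤ abs (∫ x, |x| ∂ν + |y|) := le_abs_self _
  
end CRPSAux

open CRPSAux

/-- CRPS is a proper scoring rule: for integrable distributions `ν` (forecast)
and `ρ` (truth) on ℝ,
`E_{y∼ρ}[−E|X−y| + ½E|X−X'|] ≤ E_{y∼ρ}[−E|Y−y| + ½E|Y−Y'|]`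
where `X,X' ~ ν` and `Y,Y' ~ ρ` are independent; equivalently, the energy
distance `E|X−Y| − ½E|X−X'| − ½E|Y−Y'|` is nonnegative. -/
theorem stmt13 (ν ρ : Measure ℝ) [IsProbabilityMeasure ν] [IsProbabilityMeasure ρ]
    (hν : Integrable (fun x => |x|) ν) (hρ : Integrable (fun x => |x|) ρ) :
    (∫ y, (-(∫ x, |x - y| ∂ν) + (1 / 2) * ∫ x, ∫ x', |x - x'| ∂ν ∂ν) ∂ρ
        ≤ ∫ y, (-(∫ x, |x - y| ∂ρ) + (1 / 2) * ∫ x, ∫ x', |x - x'| ∂ρ ∂ρ) ∂ρ) ∧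
    (0 ≤ (∫ x, ∫ y, |x - y| ∂ρ ∂ν)
        - (1 / 2) * (∫ x, ∫ x', |x - x'| ∂ν ∂ν)
        - (1 / 2) * (∫ y, ∫ y', |y - y'| ∂ρ ∂ρ)) := by
  have hIνρ := Ifin ν ρ hν hρ
  have hIνν := Ifin ν ν hν hν
  have hIρρ := Ifin ρ ρ hρ hρ
  -- part 2
  have hmono := Imono ν ρ
  have hreal : (I ν ν).toReal + (I ρ ρ).toReal ≤ (I ν ρ).toReal + (I ν ρ).toReal := by
    have := ENNReal.toReal_mono (ENNReal.add_ne_top.2 ⟨hIνρ, hIνρ⟩) hmono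
    rwa [ENNReal.toReal_add hIνν hIρρ, ENNReal.toReal_add hIνρ hIνρ] at this
  have e1 : ∫ x, ∫ y, |x - y| ∂ρ ∂ν = (I ν ρ).toReal := convI ν ρ hρ
  have e2 : ∫ x, ∫ x', |x - x'| ∂ν ∂ν = (I ν ν).toReal := convI ν ν hν
  have e3 : ∫ y, ∫ y', |y - y'| ∂ρ ∂ρ = (I ρ ρ).toReal := convI ρ ρ hρ
  have part2 : 0 ≤ (∫ x, ∫ y, |x - y| ∂ρ ∂ν)
      - (1 / 2) * (∫ x, ∫ x', |x - x'| ∂ν ∂ν)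
      - (1 / 2) * (∫ y, ∫ y', |y - y'| ∂ρ ∂ρ) := by
    rw [e1, e2, e3]; linarith
  refine ⟨?_, part2⟩
  -- part 1
  have e4 : ∫ y, ∫ x, |x - y| ∂ν ∂ρ = (I ν ρ).toReal := by
    have : ∀ y : ℝ, ∫ x, |x - y| ∂ν = ∫ x, |y - x| ∂ν := by
      intro y; congr 1; ext x; exact abs_sub_comm x y
    simp_rw [this]
    rw [convI ρ ν hν, Icomm]
  have hint1 := h_integrable ν ρ hν hρ
  have hint2 := h_integrable ρ ρ hρ hρ
  have hint1' : Integrable (fun y => -(∫ x, |x - y| ∂ν)) ρ := hint1.neg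
  have hint2' : Integrable (fun y => -(∫ x, |x - y| ∂ρ)) ρ := hint2.neg
  rw [integral_add hint1' (integrable_const _), integral_add hint2' (integrable_const _),
    integral_neg, integral_neg, integral_const, integral_const, probReal_univ, e4]
  have e5 : ∫ y, ∫ x, |x - y| ∂ρ ∂ρ = (I ρ ρ).toReal := by
    have : ∀ y : ℝ, ∫ x, |x - y| ∂ρ = ∫ x, |y - x| ∂ρ := by
      intro y; congr 1; ext x; exact abs_sub_comm x y
    simp_rw [this]
    rw [convI ρ ρ hρ, Icomm]
  rw [e5, e2, e3]
  simp only [one_smul, smul_eq_mul, ENNReal.toReal_one]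
  linarith
end

section
/- Let θ₁,...,θ_M be i.i.d. from density q_φ and t₁,...,t_M i.i.d. Uniform(0,1), independent. Suppose 0 < p(y|θ) ≤ C for all θ. Conditional on the event that at least one j satisfies t_j < p(y|θ_j)/C, the rejection-sampling estimator g^RS = [Σ_j 1{t_j < p(y|θ_j)/C} ∂_φ log q_φ(θ_j)] / [Σ_j 1{t_j < p(y|θ_j)/C}] has expectation equal to ∂_φ log ∫ p(y|θ) q_φ(θ) dθ. -/
open MeasureTheory

open Filter
open scoped ENNReal NNReal

section AuxRS

lemma meas_deriv_param {Θ : Type*} [MeasurableSpace Θ] (q : ℝ → Θ → ℝ)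
    (hqm : ∀ s, Measurable (q s)) (φ : ℝ)
    (hqd : ∀ θ, DifferentiableAt ℝ (fun s => q s θ) φ) :
    Measurable (fun θ => deriv (fun s => q s θ) φ) := by
  have key : ∀ θ, Tendsto (fun n : ℕ => (q (φ + (1:ℝ)/(n+1)) θ - q φ θ) * (n+1)) atTop
      (nhds (deriv (fun s => q s θ) φ)) := by
    intro θ
    have h := (hqd θ).hasDerivAt
    rw [hasDerivAt_iff_tendsto_slope] at h
    have hseq : Tendsto (fun n : ℕ => φ + (1:ℝ)/(n+1)) atTop (nhdsWithin φ {φ}ᶜ) := by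
      rw [tendsto_nhdsWithin_iff]
      constructor
      · have := tendsto_one_div_add_atTop_nhds_zero_nat (𝕜 := ℝ)
        have h2 := this.const_add φ
        simpa using h2
      · refine Eventually.of_forall fun n => ?_
        have : (0:ℝ) < 1/(n+1) := by positivity
        simp only [Set.mem_compl_iff, Set.mem_singleton_iff]
        intro hc
        nlinarith [hc]
    have := h.comp hseq
    convert this using 2 with n
    have hne : (1:ℝ)/(n+1) ≠ 0 := by positivity
    simp only [Function.comp, slope_def_field, add_sub_cancel_left]
    field_simp
  exact measurable_of_tendsto_metrizable
    (f := fun n θ => (q (φ + (1:ℝ)/(n+1)) θ - q φ θ) * (n+1))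
    (fun n => ((hqm _).sub (hqm φ)).mul_const _) (tendsto_pi_nhds.2 key)


lemma work {X : Type*} [MeasurableSpace X] (μ : Measure X) [IsProbabilityMeasure μ]
    (m : ℕ) (P : X → Prop) [DecidablePred P] (hP : MeasurableSet {x | P x})
    (f : X → ℝ) (hfm : Measurable f)
    (hfint : Integrable ({x | P x}.indicator f) μ) :
    ∫ ω : Fin (m+1) → X, (∑ j, if P (ω j) then f (ω j) else 0)
        / (∑ j, if P (ω j) then (1:ℝ) else 0) ∂(Measure.pi fun _ => μ)
      = (m+1) * ((∫ x in {x | P x}, f x ∂μ) *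
          ∫ ω' : Fin m → X, (1 + ∑ j, if P (ω' j) then (1:ℝ) else 0)⁻¹
            ∂(Measure.pi fun _ => μ)) := by
  classical
  set π : Measure (Fin (m+1) → X) := Measure.pi fun _ => μ with hπdef
  set π' : Measure (Fin m → X) := Measure.pi fun _ => μ with hπ'def
  set N : (Fin (m+1) → X) → ℝ := fun ω => ∑ j, if P (ω j) then (1:ℝ) else 0 with hN
  set h : Fin (m+1) → (Fin (m+1) → X) → ℝ :=
    fun j ω => (if P (ω j) then f (ω j) else 0) / N ω with hh
  have hNm : Measurable N :=
    Finset.measurable_sum _ fun j _ =>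
      Measurable.ite ((measurable_pi_apply j) hP) measurable_const measurable_const
  have hm : ∀ j, Measurable (h j) := fun j =>
    (Measurable.ite ((measurable_pi_apply j) hP) (hfm.comp (measurable_pi_apply j))
      measurable_const).div hNm
  -- the marginal of coordinate j is μ
  have hev : ∀ j : Fin (m+1), MeasurePreserving (fun ω : Fin (m+1) → X => ω j) π μ := by
    intro j
    refine ⟨measurable_pi_apply j, ?_⟩
    refine Measure.ext fun s hs => ?_
    rw [Measure.map_apply (measurable_pi_apply j) hs]
    have : (fun ω : Fin (m+1) → X => ω j) ⁻¹' s
        = Set.pi Set.univ (Function.update (fun _ => Set.univ) j s) := Set.eval_preimage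
    rw [this, hπdef, Measure.pi_pi,
      Fintype.prod_eq_single j fun i hi => by simp [Function.update_of_ne hi]]
    simp
  -- integrability of each term
  have hint : ∀ j, Integrable (h j) π := by
    intro j
    have hmargin : Integrable (fun ω : Fin (m+1) → X => ({x | P x}.indicator f) (ω j)) π :=
      ((hev j).integrable_comp hfint.aestronglyMeasurable).2 hfint
    refine hmargin.mono ((hm j).aestronglyMeasurable) (Eventually.of_forall fun ω => ?_)
    by_cases hj : P (ω j)
    · have hN1 : (1:ℝ) ≤ N ω := by
        have : ∀ i ∈ Finset.univ, (0:ℝ) ≤ if P (ω i) then (1:ℝ) else 0 := by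
          intro i _; split <;> norm_num
        have := Finset.single_le_sum this (Finset.mem_univ j)
        simp only [hN]
        rwa [if_pos hj] at this
      have hmem : ω j ∈ {x | P x} := hj
      simp only [hh, hj, if_true, Set.indicator_of_mem hmem]
      rw [Real.norm_eq_abs, Real.norm_eq_abs, abs_div]
      rw [abs_of_nonneg (by linarith : (0:ℝ) ≤ N ω)]
      exact div_le_self (abs_nonneg _) hN1
    · simp [hh, hj]
  -- rewrite the integrand as a sum
  have hsplit : (fun ω : Fin (m+1) → X =>
      (∑ j, if P (ω j) then f (ω j) else 0) / (∑ j, if P (ω j) then (1:ℝ) else 0))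
      = fun ω => ∑ j, h j ω := by
    funext ω; exact Finset.sum_div _ _ _
  rw [hsplit, integral_finset_sum _ fun j _ => hint j]
  -- symmetry: all terms are equal
  have hswap : ∀ j, ∫ ω, h j ω ∂π = ∫ ω, h 0 ω ∂π := by
    intro j
    set e : Fin (m+1) ≃ Fin (m+1) := Equiv.swap 0 j with he
    have mp := measurePreserving_piCongrLeft (fun _ : Fin (m+1) => μ) e
    set T := MeasurableEquiv.piCongrLeft (fun _ : Fin (m+1) => X) e with hT
    have happ : ∀ (ω : Fin (m+1) → X) (i), T ω (e i) = ω i := by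
      intro ω i
      simp [hT, MeasurableEquiv.coe_piCongrLeft, Equiv.piCongrLeft_apply_apply]
    have key : ∀ ω, h 0 (T ω) = h j ω := by
      intro ω
      have h0 : T ω 0 = ω j := by
        have : (0 : Fin (m+1)) = e j := (Equiv.swap_apply_right 0 j).symm
        rw [this, happ]
      have hNT : N (T ω) = N ω := by
        simp only [hN]
        rw [← Equiv.sum_comp e (fun i => if P (T ω i) then (1:ℝ) else 0)]
        exact Finset.sum_congr rfl fun i _ => by rw [happ]
      simp only [hh, h0, hNT]
    rw [← mp.integral_comp' (h 0)]
    exact integral_congr_ae (Eventually.of_forall fun ω => (key ω).symm)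
  have hsum0 : ∑ j, ∫ ω, h j ω ∂π = (m+1) * ∫ ω, h 0 ω ∂π := by
    rw [Finset.sum_congr rfl fun j _ => hswap j]
    simp [Finset.card_univ, mul_comm]
  rw [hsum0]
  -- split off coordinate 0
  have mp2 := (measurePreserving_piFinSuccAbove (fun _ : Fin (m+1) => μ) 0).symm
  rw [← mp2.integral_comp' (h 0)]
  have hrw : (fun z : X × (Fin m → X) =>
      h 0 ((MeasurableEquiv.piFinSuccAbove (fun _ => X) 0).symm z))
      = fun z => ({x | P x}.indicator f) z.1
          * (1 + ∑ j, if P (z.2 j) then (1:ℝ) else 0)⁻¹ := by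
    funext z
    obtain ⟨x, ω'⟩ := z
    have hcons : ∀ i : Fin (m+1),
        (MeasurableEquiv.piFinSuccAbove (fun _ : Fin (m+1) => X) 0).symm (x, ω') i
          = (Fin.cons x ω' : Fin (m+1) → X) i := by
      intro i
      simp [MeasurableEquiv.piFinSuccAbove_symm_apply, Fin.insertNthEquiv,
        Fin.insertNth_zero, Fin.zero_succAbove, Fin.cons_zero, Fin.cons_succ]
    simp only [hh, hN]
    rw [show ((MeasurableEquiv.piFinSuccAbove (fun _ : Fin (m+1) => X) 0).symm (x, ω'))
        = (Fin.cons x ω' : Fin (m+1) → X) from funext hcons]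
    rw [Fin.sum_univ_succ]
    simp only [Fin.cons_zero, Fin.cons_succ]
    by_cases hx : P x
    · have hmem : x ∈ {x | P x} := hx
      simp only [hx, if_true, Set.indicator_of_mem hmem, div_eq_mul_inv]
    · have hmem : x ∉ {x | P x} := hx
      simp [hx, Set.indicator_of_notMem hmem]
  rw [hrw, integral_prod_mul ({x | P x}.indicator f)
    (fun ω' : Fin m → X => (1 + ∑ j, if P (ω' j) then (1:ℝ) else 0)⁻¹),
    integral_indicator hP]


variable {Θ : Type*} [MeasurableSpace Θ] (ν : Measure Θ) [SigmaFinite ν]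

lemma one_draw (q : Θ → ℝ) (hqm : Measurable q) (hq0 : ∀ θ, 0 ≤ q θ)
    (lik : Θ → ℝ) (hlikm : Measurable lik) (C : ℝ) (hC : 0 < C)
    (hlik : ∀ θ, 0 < lik θ ∧ lik θ ≤ C)
    (f : Θ → ℝ)
    (hfint : Integrable ({x : Θ × ℝ | x.2 < lik x.1 / C}.indicator (fun x => f x.1))
      ((ν.withDensity fun θ => ENNReal.ofReal (q θ)).prod
        (volume.restrict (Set.Ioo (0:ℝ) 1)))) :
    ∫ x in {x : Θ × ℝ | x.2 < lik x.1 / C}, f x.1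
        ∂((ν.withDensity fun θ => ENNReal.ofReal (q θ)).prod
          (volume.restrict (Set.Ioo (0:ℝ) 1)))
      = (∫ θ, lik θ * f θ * q θ ∂ν) / C := by
  have hset : MeasurableSet {x : Θ × ℝ | x.2 < lik x.1 / C} :=
    measurableSet_lt measurable_snd ((hlikm.comp measurable_fst).div_const C)
  rw [← integral_indicator hset, integral_prod _ hfint]
  have hIiovol : ∀ θ : Θ, (volume.restrict (Set.Ioo (0:ℝ) 1)) (Set.Iio (lik θ / C))
      = ENNReal.ofReal (lik θ / C) := by
    intro θ
    rw [Measure.restrict_apply measurableSet_Iio]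
    have hpos : 0 < lik θ / C := div_pos (hlik θ).1 hC
    have hle : lik θ / C ≤ 1 := (div_le_one hC).2 (hlik θ).2
    have : Set.Iio (lik θ / C) ∩ Set.Ioo (0:ℝ) 1 = Set.Ioo 0 (lik θ / C) := by
      ext t
      constructor
      · rintro ⟨h1, h2, _⟩; exact ⟨h2, h1⟩
      · rintro ⟨h1, h2⟩; exact ⟨h2, h1, lt_of_lt_of_le h2 hle⟩
    rw [this, Real.volume_Ioo]
    simp
  have hinner : ∀ θ : Θ,
      (∫ t, {x : Θ × ℝ | x.2 < lik x.1 / C}.indicator (fun x => f x.1) (θ, t)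
          ∂(volume.restrict (Set.Ioo (0:ℝ) 1)))
        = f θ * (lik θ / C) := by
    intro θ
    have heq : (fun t => {x : Θ × ℝ | x.2 < lik x.1 / C}.indicator (fun x => f x.1) (θ, t))
        = (Set.Iio (lik θ / C)).indicator (fun _ => f θ) := by
      funext t
      by_cases h : t < lik θ / C <;> simp [Set.indicator, h]
    rw [heq, integral_indicator_const _ measurableSet_Iio, measureReal_def, hIiovol θ,
      ENNReal.toReal_ofReal (le_of_lt (div_pos (hlik θ).1 hC))]
    rw [smul_eq_mul]; ring
  rw [integral_congr_ae (Eventually.of_forall hinner)]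
  have hwd : (ν.withDensity fun θ => ENNReal.ofReal (q θ))
      = ν.withDensity (fun θ => ((q θ).toNNReal : ℝ≥0∞)) := rfl
  rw [hwd, integral_withDensity_eq_integral_smul hqm.real_toNNReal]
  have : (fun θ => (q θ).toNNReal • (f θ * (lik θ / C)))
      = fun θ => (lik θ * f θ * q θ) / C := by
    funext θ
    rw [NNReal.smul_def, Real.coe_toNNReal _ (hq0 θ), smul_eq_mul]
    ring
  rw [this, integral_div]

lemma one_draw_lint (q : Θ → ℝ) (hqm : Measurable q)
    (lik : Θ → ℝ) (hlikm : Measurable lik) (C : ℝ) (hC : 0 < C)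
    (hlik : ∀ θ, 0 < lik θ ∧ lik θ ≤ C)
    (f : Θ → ℝ) (hfm : Measurable f) :
    ∫⁻ x, ‖{x : Θ × ℝ | x.2 < lik x.1 / C}.indicator (fun x => f x.1) x‖₊
        ∂((ν.withDensity fun θ => ENNReal.ofReal (q θ)).prod
          (volume.restrict (Set.Ioo (0:ℝ) 1)))
      = ∫⁻ θ, ENNReal.ofReal (q θ) * ((‖f θ‖₊ : ℝ≥0∞) * ENNReal.ofReal (lik θ / C)) ∂ν := by
  have hset : MeasurableSet {x : Θ × ℝ | x.2 < lik x.1 / C} :=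
    measurableSet_lt measurable_snd ((hlikm.comp measurable_fst).div_const C)
  have hFm : Measurable fun x : Θ × ℝ =>
      (‖{x : Θ × ℝ | x.2 < lik x.1 / C}.indicator (fun x => f x.1) x‖₊ : ℝ≥0∞) :=
    ((hfm.comp measurable_fst).indicator hset).nnnorm.coe_nnreal_ennreal
  rw [lintegral_prod _ hFm.aemeasurable]
  have hIiovol : ∀ θ : Θ, (volume.restrict (Set.Ioo (0:ℝ) 1)) (Set.Iio (lik θ / C))
      = ENNReal.ofReal (lik θ / C) := by
    intro θ
    rw [Measure.restrict_apply measurableSet_Iio]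
    have hle : lik θ / C ≤ 1 := (div_le_one hC).2 (hlik θ).2
    have : Set.Iio (lik θ / C) ∩ Set.Ioo (0:ℝ) 1 = Set.Ioo 0 (lik θ / C) := by
      ext t
      constructor
      · rintro ⟨h1, h2, _⟩; exact ⟨h2, h1⟩
      · rintro ⟨h1, h2⟩; exact ⟨h2, h1, lt_of_lt_of_le h2 hle⟩
    rw [this, Real.volume_Ioo]
    simp
  have hinner : ∀ θ : Θ,
      (∫⁻ t, ‖{x : Θ × ℝ | x.2 < lik x.1 / C}.indicator (fun x => f x.1) (θ, t)‖₊
          ∂(volume.restrict (Set.Ioo (0:ℝ) 1)))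
        = (‖f θ‖₊ : ℝ≥0∞) * ENNReal.ofReal (lik θ / C) := by
    intro θ
    have heq : (fun t => (‖{x : Θ × ℝ | x.2 < lik x.1 / C}.indicator (fun x => f x.1) (θ, t)‖₊ : ℝ≥0∞))
        = (Set.Iio (lik θ / C)).indicator (fun _ => (‖f θ‖₊ : ℝ≥0∞)) := by
      funext t
      by_cases h : t < lik θ / C <;> simp [Set.indicator, h]
    rw [heq, lintegral_indicator measurableSet_Iio]
    rw [setLIntegral_const, hIiovol θ]
  rw [lintegral_congr hinner]
  exact (lintegral_withDensity_eq_lintegral_mul ν (hqm.ennreal_ofReal)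
    (hfm.nnnorm.coe_nnreal_ennreal.mul ((hlikm.div_const C).ennreal_ofReal)))

end AuxRS

/-- Unbiasedness of the rejection-sampling gradient estimator for the
logarithmic score: with `θ₁,…,θ_M` i.i.d. from `q_φ`, `t₁,…,t_M` i.i.d.
Uniform(0,1), and `0 < p(y|θ) ≤ C`, conditionally on at least one acceptance
`t_j < p(y|θ_j)/C`, the estimator
`g^RS = (∑ⱼ 1{accept j} ∂_φ log q_φ(θⱼ)) / (∑ⱼ 1{accept j})`
has expectation `∂_φ log ∫ p(y|θ) q_φ(θ) dθ`. -/
theorem stmt14 {Θ : Type*} [MeasurableSpace Θ] (ν : Measure Θ) [SigmaFinite ν]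
    (M : ℕ) (hM : 0 < M)
    (qfam : ℝ → Θ → ℝ) (lik : Θ → ℝ) (C : ℝ) (hC : 0 < C)
    (hlik : ∀ θ, 0 < lik θ ∧ lik θ ≤ C) (hlikm : Measurable lik)
    (φ : ℝ)
    (hqm : ∀ s, Measurable (qfam s))
    (hq0 : ∀ s θ, 0 ≤ qfam s θ)
    (hq1 : ∀ s, ∫ θ, qfam s θ ∂ν = 1)
    -- pointwise differentiability of the family:
    (hqd : ∀ θ, DifferentiableAt ℝ (fun s => qfam s θ) φ)
    -- differentiation under the integral sign is valid:
    (hDUI : HasDerivAt (fun s => ∫ θ, lik θ * qfam s θ ∂ν)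
      (∫ θ, lik θ * deriv (fun s => qfam s θ) φ ∂ν) φ)
    -- the joint law of one draw `(θ, t)`:
    (base : Measure (Θ × ℝ)) [IsProbabilityMeasure base]
    (hbase : base = (ν.withDensity fun θ => ENNReal.ofReal (qfam φ θ)).prod
      (MeasureTheory.volume.restrict (Set.Ioo (0 : ℝ) 1)))
    -- the joint law of the `M` i.i.d. draws:
    (π : Measure (Fin M → Θ × ℝ)) (hπ : π = Measure.pi fun _ => base)
    -- the acceptance event:
    (A : Set (Fin M → Θ × ℝ))
    (hA : A = {ω | ∃ j, (ω j).2 < lik (ω j).1 / C})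
    -- the rejection-sampling estimator:
    (g : (Fin M → Θ × ℝ) → ℝ)
    (hg : ∀ ω, g ω =
      (∑ j, if (ω j).2 < lik (ω j).1 / C
        then deriv (fun s => Real.log (qfam s (ω j).1)) φ else 0)
      / (∑ j, if (ω j).2 < lik (ω j).1 / C then (1 : ℝ) else 0)) :
    (∫ ω in A, g ω ∂π) / (π A).toReal
      = deriv (fun s => Real.log (∫ θ, lik θ * qfam s θ ∂ν)) φ := by
  classical
  obtain ⟨m, rfl⟩ : ∃ m, M = m + 1 := ⟨M - 1, (Nat.succ_pred_eq_of_pos hM).symm⟩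
  subst hπ hA hbase
  -- basic definitions
  set q' : Θ → ℝ := fun θ => deriv (fun s => qfam s θ) φ with hq'def
  set S : Θ → ℝ := fun θ => q' θ / qfam φ θ with hSdef
  have hq'm : Measurable q' := meas_deriv_param qfam hqm φ hqd
  have hSm : Measurable S := hq'm.div (hqm φ)
  have hq'0 : ∀ θ, qfam φ θ = 0 → q' θ = 0 := by
    intro θ h0
    have hmin : IsLocalMin (fun s => qfam s θ) φ :=
      Eventually.of_forall fun s => by simpa [h0] using hq0 s θ
    simpa [hq'def] using hmin.deriv_eq_zero
  have hderiv_log : ∀ θ, 0 < qfam φ θ →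
      deriv (fun s => Real.log (qfam s θ)) φ = S θ :=
    fun θ h => ((hqd θ).hasDerivAt.log (ne_of_gt h)).deriv
  -- the normalizing constant and its derivative
  have hqint : Integrable (qfam φ) ν := by
    by_contra hni
    have h1 := hq1 φ
    rw [integral_undef hni] at h1
    norm_num at h1
  set Z : ℝ := ∫ θ, lik θ * qfam φ θ ∂ν with hZdef
  have hlqint : Integrable (fun θ => lik θ * qfam φ θ) ν := by
    refine Integrable.mono' (hqint.const_mul C)
      ((hlikm.mul (hqm φ)).aestronglyMeasurable) (Eventually.of_forall fun θ => ?_)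
    rw [Real.norm_eq_abs, abs_mul, abs_of_pos (hlik θ).1, abs_of_nonneg (hq0 φ θ)]
    exact mul_le_mul_of_nonneg_right (hlik θ).2 (hq0 φ θ)
  have hZpos : 0 < Z := by
    rcases lt_or_eq_of_le (integral_nonneg (f := fun θ => lik θ * qfam φ θ) fun θ =>
      mul_nonneg (le_of_lt (hlik θ).1) (hq0 φ θ)) with h | h
    · exact h
    · exfalso
      have hz := (integral_eq_zero_iff_of_nonneg
        (fun θ => mul_nonneg (le_of_lt (hlik θ).1) (hq0 φ θ)) hlqint).1 h.symm
      have hq0ae : (qfam φ) =ᵐ[ν] 0 := by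
        filter_upwards [hz] with θ hθ
        have := mul_eq_zero.1 hθ
        rcases this with h' | h'
        · exact absurd h' (ne_of_gt (hlik θ).1)
        · exact h'
      have := hq1 φ
      rw [integral_congr_ae hq0ae] at this
      simp at this
  set Zd : ℝ := ∫ θ, lik θ * q' θ ∂ν with hZddef
  have hDUI' : HasDerivAt (fun s => ∫ θ, lik θ * qfam s θ ∂ν) Zd φ := hDUI
  have hRHS : deriv (fun s => Real.log (∫ θ, lik θ * qfam s θ ∂ν)) φ = Zd / Z := by
    have := (hDUI'.log (ne_of_gt hZpos)).deriv
    simpa [hZdef] using this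
  rw [hRHS]
  -- names for the measures
  set μb : Measure (Θ × ℝ) := (ν.withDensity fun θ => ENNReal.ofReal (qfam φ θ)).prod
      (volume.restrict (Set.Ioo (0 : ℝ) 1)) with hμbdef
  set Pi1 : Measure (Fin (m+1) → Θ × ℝ) := Measure.pi fun _ => μb with hPi1def
  -- the acceptance predicate
  set P : Θ × ℝ → Prop := fun x => x.2 < lik x.1 / C with hPdef
  have hPm : MeasurableSet {x : Θ × ℝ | P x} := by
    rw [hPdef]
    exact measurableSet_lt measurable_snd ((hlikm.comp measurable_fst).div_const C)
  have hAm : MeasurableSet {ω : Fin (m+1) → Θ × ℝ | ∃ j, (ω j).2 < lik (ω j).1 / C} := by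
    have : {ω : Fin (m+1) → Θ × ℝ | ∃ j, (ω j).2 < lik (ω j).1 / C}
        = ⋃ j, (fun ω : Fin (m+1) → Θ × ℝ => ω j) ⁻¹' {x : Θ × ℝ | P x} := by
      ext ω; simp [hPdef]
    rw [this]
    exact MeasurableSet.iUnion fun j => measurable_pi_apply j hPm
  -- a.e., every coordinate has positive density
  have hbase0 : μb {x : Θ × ℝ | ¬ 0 < qfam φ x.1} = 0 := by
    have hBset : {x : Θ × ℝ | ¬ 0 < qfam φ x.1}
        = {θ | qfam φ θ = 0} ×ˢ (Set.univ : Set ℝ) := by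
      ext x
      simp only [Set.mem_setOf_eq, Set.mem_prod, Set.mem_univ, and_true, not_lt]
      exact ⟨fun h => le_antisymm h (hq0 φ x.1), fun h => le_of_eq h⟩
    have hzset : (ν.withDensity fun θ => ENNReal.ofReal (qfam φ θ)) {θ | qfam φ θ = 0} = 0 := by
      have hms : MeasurableSet {θ | qfam φ θ = 0} := (hqm φ) (measurableSet_singleton 0)
      rw [withDensity_apply _ hms]
      rw [setLIntegral_congr_fun hms
        (fun θ (hθ : qfam φ θ = 0) =>
          show ENNReal.ofReal (qfam φ θ) = (fun _ => (0:ℝ≥0∞)) θ by simp [hθ])]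
      simp
    rw [hμbdef, hBset, Measure.prod_prod, hzset, zero_mul]
  have haepos : ∀ᵐ ω ∂Pi1, ∀ j, 0 < qfam φ (ω j).1 := by
    rw [ae_all_iff]
    intro j
    have hnull : Pi1 ((fun ω : Fin (m+1) → Θ × ℝ => ω j) ⁻¹' {x : Θ × ℝ | ¬ 0 < qfam φ x.1})
        = 0 := by
      rw [hPi1def]
      exact Measure.pi_eval_preimage_null (μ := fun _ : Fin (m+1) => μb) (i := j) hbase0
    exact hnull
  -- the two symmetric-estimator functions
  set GS : (Fin (m+1) → Θ × ℝ) → ℝ := fun ω =>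
    (∑ j, if P (ω j) then S (ω j).1 else 0) / (∑ j, if P (ω j) then (1:ℝ) else 0) with hGSdef
  set G1 : (Fin (m+1) → Θ × ℝ) → ℝ := fun ω =>
    (∑ j, if P (ω j) then (1:ℝ) else 0) / (∑ j, if P (ω j) then (1:ℝ) else 0) with hG1def
  -- the set integral of g equals the full integral of GS
  have hsetint : ∫ ω in {ω : Fin (m+1) → Θ × ℝ | ∃ j, (ω j).2 < lik (ω j).1 / C}, g ω ∂Pi1
      = ∫ ω, GS ω ∂Pi1 := by
    rw [← integral_indicator hAm]
    refine integral_congr_ae ?_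
    filter_upwards [haepos] with ω hω
    by_cases hmem : ω ∈ {ω : Fin (m+1) → Θ × ℝ | ∃ j, (ω j).2 < lik (ω j).1 / C}
    · rw [Set.indicator_of_mem hmem, hg ω]
      simp only [hGSdef]
      have hnum : (∑ j, if (ω j).2 < lik (ω j).1 / C
            then deriv (fun s => Real.log (qfam s (ω j).1)) φ else 0)
          = ∑ j, if P (ω j) then S (ω j).1 else 0 :=
        Finset.sum_congr rfl fun j _ => if_congr Iff.rfl (hderiv_log _ (hω j)) rfl
      have hden : (∑ j, if (ω j).2 < lik (ω j).1 / C then (1:ℝ) else 0)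
          = ∑ j, if P (ω j) then (1:ℝ) else 0 :=
        Finset.sum_congr rfl fun j _ => if_congr Iff.rfl rfl rfl
      rw [hnum, hden]
    · rw [Set.indicator_of_notMem hmem]
      have hz : ∀ i, ¬ P (ω i) := fun i hp => hmem ⟨i, hp⟩
      simp only [hGSdef]
      have hden0 : (∑ j : Fin (m+1), if P (ω j) then (1:ℝ) else 0) = 0 :=
        Finset.sum_eq_zero fun j _ => if_neg (hz j)
      rw [hden0, div_zero]
  -- the measure of A equals the full integral of G1
  have hPiA : (Pi1 {ω : Fin (m+1) → Θ × ℝ | ∃ j, (ω j).2 < lik (ω j).1 / C}).toReal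
      = ∫ ω, G1 ω ∂Pi1 := by
    have hind : ∀ ω : Fin (m+1) → Θ × ℝ,
        ({ω : Fin (m+1) → Θ × ℝ | ∃ j, (ω j).2 < lik (ω j).1 / C}).indicator
          (fun _ => (1:ℝ)) ω = G1 ω := by
      intro ω
      by_cases hω : ω ∈ {ω : Fin (m+1) → Θ × ℝ | ∃ j, (ω j).2 < lik (ω j).1 / C}
      · obtain ⟨j, hj⟩ := hω
        have hpos : 0 < ∑ j, if P (ω j) then (1:ℝ) else 0 :=
          Finset.sum_pos' (fun i _ => by split <;> norm_num)
            ⟨j, Finset.mem_univ j, by rw [if_pos (show P (ω j) from hj)]; norm_num⟩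
        rw [Set.indicator_of_mem (show ω ∈ {ω : Fin (m+1) → Θ × ℝ |
          ∃ j, (ω j).2 < lik (ω j).1 / C} from ⟨j, hj⟩)]
        simp only [hG1def]
        exact (div_self (ne_of_gt hpos)).symm
      · have hz : ∀ i, ¬ P (ω i) := fun i hp => hω ⟨i, hp⟩
        rw [Set.indicator_of_notMem hω]
        simp only [hG1def]
        have hden0 : (∑ j : Fin (m+1), if P (ω j) then (1:ℝ) else 0) = 0 :=
          Finset.sum_eq_zero fun j _ => if_neg (hz j)
        rw [hden0, div_zero]
    have h := integral_indicator_const (μ := Pi1) (1:ℝ) hAm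
    rw [integral_congr_ae (Eventually.of_forall hind)] at h
    rw [h, smul_eq_mul, mul_one]; rfl
  rw [hsetint, hPiA]
  -- integrability of the indicator of constant 1
  have hint1 : Integrable ({x : Θ × ℝ | P x}.indicator fun _ => (1:ℝ)) μb :=
    (integrable_const 1).indicator hPm
  -- the value of the one-draw integral for f = 1
  have e2base : (∫ x in {x : Θ × ℝ | P x}, (1:ℝ) ∂μb) = Z / C := by
    have h0 : (∫ x in {x : Θ × ℝ | P x}, (fun _ : Θ => (1:ℝ)) x.1 ∂μb)
        = (∫ θ, lik θ * (fun _ : Θ => (1:ℝ)) θ * qfam φ θ ∂ν) / C :=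
      one_draw ν (qfam φ) (hqm φ) (hq0 φ) lik hlikm C hC hlik (fun _ => (1:ℝ)) hint1
    rw [show (∫ x in {x : Θ × ℝ | P x}, (1:ℝ) ∂μb)
        = (∫ x in {x : Θ × ℝ | P x}, (fun _ : Θ => (1:ℝ)) x.1 ∂μb) from rfl, h0, hZdef]
    congr 1
    exact integral_congr_ae (Eventually.of_forall fun θ => by ring)
  by_cases hSint : Integrable ({x : Θ × ℝ | P x}.indicator fun x => S x.1) μb
  · -- integrable case
    have e1 := work μb m P hPm (fun x => S x.1) (hSm.comp measurable_fst) hSint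
    have e2 := work μb m P hPm (fun _ => (1:ℝ)) measurable_const hint1
    have e1' : ∫ ω, GS ω ∂Pi1 = (m+1 : ℝ) * ((∫ x in {x : Θ × ℝ | P x}, S x.1 ∂μb) *
        ∫ ω' : Fin m → Θ × ℝ, (1 + ∑ j, if P (ω' j) then (1:ℝ) else 0)⁻¹
          ∂(Measure.pi fun _ => μb)) := e1
    have e2' : ∫ ω, G1 ω ∂Pi1 = (m+1 : ℝ) * ((∫ x in {x : Θ × ℝ | P x}, (1:ℝ) ∂μb) *
        ∫ ω' : Fin m → Θ × ℝ, (1 + ∑ j, if P (ω' j) then (1:ℝ) else 0)⁻¹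
          ∂(Measure.pi fun _ => μb)) := e2
    set K : ℝ := ∫ ω' : Fin m → Θ × ℝ, (1 + ∑ j, if P (ω' j) then (1:ℝ) else 0)⁻¹
          ∂(Measure.pi fun _ => μb) with hKdef
    -- positivity of K
    have hKm : Measurable fun ω' : Fin m → Θ × ℝ =>
        (1 + ∑ j, if P (ω' j) then (1:ℝ) else 0)⁻¹ :=
      (measurable_const.add (Finset.measurable_sum _ fun j _ =>
        Measurable.ite (measurable_pi_apply j hPm) measurable_const measurable_const)).inv
    have hsum0 : ∀ ω' : Fin m → Θ × ℝ, (0:ℝ) ≤ ∑ j, if P (ω' j) then (1:ℝ) else 0 :=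
      fun ω' => Finset.sum_nonneg fun j _ => by split <;> norm_num
    have hKint : Integrable (fun ω' : Fin m → Θ × ℝ =>
        (1 + ∑ j, if P (ω' j) then (1:ℝ) else 0)⁻¹) (Measure.pi fun _ => μb) := by
      refine Integrable.mono' (integrable_const 1) hKm.aestronglyMeasurable
        (Eventually.of_forall fun ω' => ?_)
      have := hsum0 ω'
      rw [Real.norm_eq_abs, abs_of_nonneg (by positivity)]
      exact inv_le_one_of_one_le₀ (by linarith)
    have hKpos : 0 < K := by
      have hle := integral_mono (μ := Measure.pi fun _ : Fin m => μb)
        (integrable_const (((m:ℝ)+1)⁻¹)) hKint (fun ω' => by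
          have h1 := hsum0 ω'
          have h2 : (∑ j : Fin m, if P (ω' j) then (1:ℝ) else 0) ≤ m := by
            calc (∑ j : Fin m, if P (ω' j) then (1:ℝ) else 0)
                ≤ ∑ _j : Fin m, (1:ℝ) := Finset.sum_le_sum fun j _ => by split <;> norm_num
              _ = m := by simp
          exact inv_anti₀ (by linarith) (by linarith))
      rw [integral_const] at hle
      simp only [measure_univ, probReal_univ, ENNReal.toReal_one, smul_eq_mul, one_mul] at hle
      calc (0:ℝ) < ((m:ℝ)+1)⁻¹ := by positivity
        _ ≤ K := hle
    -- value of the one-draw integral for f = S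
    have eS : (∫ x in {x : Θ × ℝ | P x}, S x.1 ∂μb) = Zd / C := by
      have h0 : (∫ x in {x : Θ × ℝ | P x}, S x.1 ∂μb)
          = (∫ θ, lik θ * S θ * qfam φ θ ∂ν) / C :=
        one_draw ν (qfam φ) (hqm φ) (hq0 φ) lik hlikm C hC hlik S hSint
      rw [h0, hZddef]
      congr 1
      refine integral_congr_ae (Eventually.of_forall fun θ => ?_)
      rcases eq_or_lt_of_le (hq0 φ θ) with h0' | hpos
      · have hz := hq'0 θ h0'.symm
        simp [hSdef, ← h0', hz]
      · have hq : qfam φ θ ≠ 0 := ne_of_gt hpos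
        simp only [hSdef]
        field_simp
    rw [e1', e2', eS, e2base]
    have hm1 : ((m:ℝ)+1) ≠ 0 := by positivity
    rw [mul_div_mul_left _ _ hm1, mul_div_mul_right _ _ (ne_of_gt hKpos)]
    rw [div_div_div_cancel_right₀]
    exact ne_of_gt hC
  · -- non-integrable case : both sides vanish
    have hGSni : ¬ Integrable GS Pi1 := by
      intro hGi
      set E := MeasurableEquiv.piFinSuccAbove (fun _ : Fin (m+1) => Θ × ℝ) 0 with hE
      have mp := (measurePreserving_piFinSuccAbove (fun _ : Fin (m+1) => μb) 0).symm
      have hGi2 : Integrable (GS ∘ E.symm) (μb.prod (Measure.pi fun _ : Fin m => μb)) :=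
        (mp.integrable_comp_emb E.symm.measurableEmbedding).2 hGi
      haveI : (ae (Measure.pi fun _ : Fin m => μb)).NeBot :=
        ae_neBot.2 (IsProbabilityMeasure.ne_zero _)
      obtain ⟨ω', hω'⟩ := hGi2.prod_left_ae.exists
      set c : ℝ := ∑ j : Fin m, (if P (ω' j) then S (ω' j).1 else 0) with hcdef
      set k : ℝ := ∑ j : Fin m, (if P (ω' j) then (1:ℝ) else 0) with hkdef
      have hk0 : (0:ℝ) ≤ k := Finset.sum_nonneg fun j _ => by split <;> norm_num
      have hk1 : (1:ℝ) + k ≠ 0 := by positivity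
      have hsec : (fun x : Θ × ℝ => (GS ∘ E.symm) (x, ω'))
          = fun x => ((if P x then S x.1 else 0) + c) / ((if P x then (1:ℝ) else 0) + k) := by
        funext x
        have hcons : E.symm (x, ω') = (Fin.cons x ω' : Fin (m+1) → Θ × ℝ) := by
          funext i
          simp [hE, MeasurableEquiv.piFinSuccAbove_symm_apply, Fin.insertNthEquiv,
            Fin.insertNth_zero, Fin.zero_succAbove, Fin.cons_zero, Fin.cons_succ]
        simp only [Function.comp, hcons, hGSdef]
        rw [Fin.sum_univ_succ, Fin.sum_univ_succ]
        simp only [Fin.cons_zero, Fin.cons_succ]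
        rfl
      rw [hsec] at hω'
      have h2 : Integrable ({x : Θ × ℝ | P x}.indicator
          (fun x => (S x.1 + c) / (1 + k))) μb := by
        refine (hω'.indicator hPm).congr (Eventually.of_forall fun x => ?_)
        by_cases hx : P x
        · rw [Set.indicator_of_mem (show x ∈ _ from hx), Set.indicator_of_mem (show x ∈ _ from hx),
            if_pos hx, if_pos hx]
        · rw [Set.indicator_of_notMem (show x ∉ _ from hx),
            Set.indicator_of_notMem (show x ∉ _ from hx)]
      have h3 : Integrable ({x : Θ × ℝ | P x}.indicator fun x => S x.1) μb := by
        have heq : ({x : Θ × ℝ | P x}.indicator fun x => S x.1)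
            = fun x => (1+k) * ({x : Θ × ℝ | P x}.indicator (fun x => (S x.1 + c)/(1+k)) x)
                - {x : Θ × ℝ | P x}.indicator (fun _ => c) x := by
          funext x
          by_cases hx : P x
          · rw [Set.indicator_of_mem (show x ∈ _ from hx), Set.indicator_of_mem (show x ∈ _ from hx),
              Set.indicator_of_mem (show x ∈ _ from hx)]
            field_simp
            ring
          · rw [Set.indicator_of_notMem (show x ∉ _ from hx),
              Set.indicator_of_notMem (show x ∉ _ from hx),
              Set.indicator_of_notMem (show x ∉ _ from hx)]
            ring
        rw [heq]
        exact (h2.const_mul _).sub ((integrable_const c).indicator hPm)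
      exact hSint h3
    have hGS0 : ∫ ω, GS ω ∂Pi1 = 0 := integral_undef hGSni
    have hZd0 : Zd = 0 := by
      have hni : ¬ Integrable (fun θ => lik θ * q' θ) ν := by
        intro hint
        apply hSint
        refine ⟨((hSm.comp measurable_fst).indicator hPm).aestronglyMeasurable, ?_⟩
        have hlint : (∫⁻ x, ‖({x : Θ × ℝ | P x}.indicator fun x => S x.1) x‖₊ ∂μb)
            = ∫⁻ θ, ENNReal.ofReal (qfam φ θ)
                * ((‖S θ‖₊ : ℝ≥0∞) * ENNReal.ofReal (lik θ / C)) ∂ν :=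
          one_draw_lint ν (qfam φ) (hqm φ) lik hlikm C hC hlik S hSm
        have hpoint : ∀ θ, ENNReal.ofReal (qfam φ θ)
            * ((‖S θ‖₊ : ℝ≥0∞) * ENNReal.ofReal (lik θ / C))
            = ENNReal.ofReal |lik θ * q' θ| * ENNReal.ofReal (1/C) := by
          intro θ
          rw [← enorm_eq_nnnorm, Real.enorm_eq_ofReal_abs]
          rw [← ENNReal.ofReal_mul (abs_nonneg _), ← ENNReal.ofReal_mul (hq0 φ θ)]
          rw [← ENNReal.ofReal_mul (abs_nonneg _)]
          congr 1
          rcases eq_or_lt_of_le (hq0 φ θ) with h0' | hpos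
          · have hz := hq'0 θ h0'.symm
            simp [hSdef, ← h0', hz]
          · have hq : qfam φ θ ≠ 0 := ne_of_gt hpos
            simp only [hSdef]
            rw [abs_div, abs_of_pos hpos, abs_mul, abs_of_pos (hlik θ).1]
            field_simp
        show (∫⁻ x, ‖({x : Θ × ℝ | P x}.indicator fun x => S x.1) x‖₊ ∂μb) < ⊤
        rw [hlint, lintegral_congr hpoint,
          lintegral_mul_const (f := fun a => ENNReal.ofReal |lik a * q' a|) _ ((hlikm.mul hq'm).abs.ennreal_ofReal)]
        refine ENNReal.mul_lt_top ?_ ENNReal.ofReal_lt_top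
        have h' : (∫⁻ θ, (‖lik θ * q' θ‖₊ : ℝ≥0∞) ∂ν) < ⊤ := hint.2
        simpa only [← enorm_eq_nnnorm, Real.enorm_eq_ofReal_abs] using h'
      exact integral_undef hni
    rw [hGS0, hZd0, zero_div, zero_div]
end
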